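/- For every integer r ≥ 1, the alternating sum ∑_{i=0}^{r} (-1)^i · C(r, i) / (r·i + 1) equals ∏_{i=1}^{r} (1 − 1/(r·i + 1)). -/

import Mathlib

open Finset

lemma key_pf (n : ℕ) : ∀ x : ℝ, 0 < x →
    ∑ i ∈ Finset.range (n + 1), (-1 : ℝ) ^ i * (n.choose i) / (x + i) =
      (Nat.factorial n : ℝ) / ∏ i ∈ Finset.range (n + 1), (x + i) := by
  induction n with
  | zero => intro x hx; simp
  | succ n ih =>
    intro x hx
    have h1 := ih x hx
    have h2 := ih (x + 1) (by linarith)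
    have hA : ∑ i ∈ range (n + 1), (-1 : ℝ) ^ (i+1) * (((n+1).choose (i+1) : ℕ) : ℝ) / (x + ((i+1 : ℕ) : ℝ))
        = (∑ i ∈ range (n + 1), (-1 : ℝ) ^ (i+1) * ((n.choose (i+1) : ℕ) : ℝ) / (x + ((i+1 : ℕ) : ℝ)))
          + (∑ i ∈ range (n + 1), -((-1 : ℝ) ^ i * ((n.choose i : ℕ) : ℝ) / ((x + 1) + (i : ℝ)))) := by
      rw [← Finset.sum_add_distrib]
      refine Finset.sum_congr rfl fun i _ => ?_
      have hne : x + ((i+1 : ℕ) : ℝ) ≠ 0 := by positivity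
      have hD : (x + 1) + (i : ℝ) = x + ((i+1 : ℕ) : ℝ) := by push_cast; ring
      rw [hD, Nat.choose_succ_succ, pow_succ]
      push_cast
      field_simp
      ring
    have hlast : ∑ i ∈ range (n + 1), (-1 : ℝ) ^ (i+1) * ((n.choose (i+1) : ℕ) : ℝ) / (x + ((i+1 : ℕ) : ℝ))
        = ∑ i ∈ range n, (-1 : ℝ) ^ (i+1) * ((n.choose (i+1) : ℕ) : ℝ) / (x + ((i+1 : ℕ) : ℝ)) := by
      rw [Finset.sum_range_succ]
      simp [Nat.choose_succ_self]
    have hsplit : ∑ i ∈ Finset.range (n + 2), (-1 : ℝ) ^ i * (((n+1).choose i : ℕ) : ℝ) / (x + i)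
        = (∑ i ∈ Finset.range (n + 1), (-1 : ℝ) ^ i * ((n.choose i : ℕ) : ℝ) / (x + i))
          - ∑ i ∈ Finset.range (n + 1), (-1 : ℝ) ^ i * ((n.choose i : ℕ) : ℝ) / ((x + 1) + i) := by
      rw [Finset.sum_range_succ' (fun i => (-1 : ℝ) ^ i * (((n+1).choose i : ℕ) : ℝ) / (x + i)) (n+1)]
      rw [Finset.sum_range_succ' (fun i => (-1 : ℝ) ^ i * ((n.choose i : ℕ) : ℝ) / (x + i)) n]
      simp only [Nat.choose_zero_right]
      rw [hA, hlast, Finset.sum_neg_distrib]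
      ring
    rw [hsplit, h1, h2]
    have hRpos : 0 < ∏ i ∈ range n, ((x + 1) + (i : ℝ)) :=
      Finset.prod_pos fun i _ => by positivity
    have hP : ∏ i ∈ range (n + 1), (x + (i : ℝ)) = x * ∏ i ∈ range n, ((x + 1) + (i : ℝ)) := by
      rw [Finset.prod_range_succ' (fun i => x + (i : ℝ)) n]
      simp only [Nat.cast_zero, add_zero]
      rw [mul_comm]
      congr 1
      refine Finset.prod_congr rfl fun i _ => ?_
      push_cast; ring
    have hQ : ∏ i ∈ range (n + 1), ((x + 1) + (i : ℝ)) = (∏ i ∈ range n, ((x + 1) + (i : ℝ))) * (x + 1 + n) := by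
      rw [Finset.prod_range_succ]
    have hP2 : ∏ i ∈ range (n + 2), (x + (i : ℝ)) = x * ((∏ i ∈ range n, ((x + 1) + (i : ℝ))) * (x + 1 + n)) := by
      rw [Finset.prod_range_succ, hP]
      push_cast; ring
    rw [hP, hQ, hP2, Nat.factorial_succ]
    have hx1 : (0:ℝ) < x + 1 + n := by positivity
    have hR : (∏ i ∈ range n, ((x + 1) + (i : ℝ))) ≠ 0 := ne_of_gt hRpos
    field_simp
    push_cast
    ring

theorem stmt0 (r : ℕ) (hr : 1 ≤ r) :
    ∑ i ∈ Finset.range (r + 1), (-1 : ℝ) ^ i * (r.choose i) / ((r : ℝ) * i + 1) =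
      ∏ i ∈ Finset.Icc 1 r, (1 - 1 / ((r : ℝ) * i + 1)) := by
  have hr0 : (0:ℝ) < r := by exact_mod_cast hr
  have hx : (0:ℝ) < 1 / r := by positivity
  have hk := key_pf r (1/r) hx
  -- rewrite each summand
  have hsum : ∑ i ∈ Finset.range (r + 1), (-1 : ℝ) ^ i * (r.choose i) / ((r : ℝ) * i + 1)
      = (1/r) * ∑ i ∈ Finset.range (r + 1), (-1 : ℝ) ^ i * (r.choose i) / (1/r + i) := by
    rw [Finset.mul_sum]
    refine Finset.sum_congr rfl fun i _ => ?_
    have h1 : (r : ℝ) * i + 1 ≠ 0 := by positivity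
    have h2 : (1:ℝ)/r + i ≠ 0 := by positivity
    rw [div_add' _ _ _ (ne_of_gt hr0), div_div_eq_mul_div,
      show (1:ℝ) + ↑i * ↑r = (r:ℝ) * ↑i + 1 from by ring, one_div, inv_mul_eq_div, div_div,
      mul_comm ((r:ℝ) * ↑i + 1) (r:ℝ), mul_comm ((-1:ℝ)^i * ((r.choose i : ℕ) : ℝ)) (r:ℝ),
      mul_div_mul_left _ _ (ne_of_gt hr0)]
  -- compute the product of (1/r + i)
  have hprod : ∏ i ∈ Finset.range (r + 1), ((1:ℝ)/r + i)
      = (∏ i ∈ Finset.Icc 1 r, ((r : ℝ) * i + 1)) / r ^ (r+1) := by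
    have e1 : ∏ i ∈ Finset.range (r + 1), ((1:ℝ)/r + i)
        = ∏ i ∈ Finset.range (r + 1), (((r : ℝ) * i + 1) / r) := by
      refine Finset.prod_congr rfl fun i _ => ?_
      field_simp
      ring
    rw [e1, Finset.prod_div_distrib, Finset.prod_const, Finset.card_range]
    congr 1
    have : Finset.Icc 1 r = Finset.Ico 1 (r+1) := by rw [Finset.Ico_add_one_right_eq_Icc]
    rw [this, Finset.prod_Ico_eq_prod_range]
    rw [Finset.prod_range_succ' (fun i => (r : ℝ) * i + 1) r]
    simp only [Nat.cast_zero, mul_zero, zero_add]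
    rw [mul_one]
    refine Finset.prod_congr rfl fun i _ => ?_
    push_cast; ring
  have hApos : 0 < ∏ i ∈ Finset.Icc 1 r, ((r : ℝ) * i + 1) :=
    Finset.prod_pos fun i _ => by positivity
  -- rewrite RHS
  have hrhs : ∏ i ∈ Finset.Icc 1 r, (1 - 1 / ((r : ℝ) * i + 1))
      = ((r:ℝ) ^ r * Nat.factorial r) / ∏ i ∈ Finset.Icc 1 r, ((r : ℝ) * i + 1) := by
    have e1 : ∀ i ∈ Finset.Icc 1 r, (1 - 1 / ((r : ℝ) * i + 1)) = ((r:ℝ) * i) / ((r : ℝ) * i + 1) := by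
      intro i _
      have : (r : ℝ) * i + 1 ≠ 0 := by positivity
      field_simp
      ring
    rw [Finset.prod_congr rfl e1, Finset.prod_div_distrib]
    congr 1
    rw [Finset.prod_mul_distrib, Finset.prod_const, Nat.card_Icc]
    simp only [Nat.add_sub_cancel]
    congr 1
    rw [← Nat.cast_prod]
    congr 1
    rw [show Finset.Icc 1 r = Finset.Ico 1 (r+1) from (Finset.Ico_add_one_right_eq_Icc 1 r).symm,
        Finset.prod_Ico_eq_prod_range]
    simp only [Nat.add_sub_cancel]
    rw [← Finset.prod_range_add_one_eq_factorial]
    exact Finset.prod_congr rfl fun i _ => by omega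
  rw [hsum, hk, hprod, hrhs]
  have hA : (∏ i ∈ Finset.Icc 1 r, ((r : ℝ) * i + 1)) ≠ 0 := ne_of_gt hApos
  field_simp
  ring
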